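/- Let G be a finite graph and let t_1,...,t_m be a path decomposition of G. Define an ordering of the vertices of G by listing first the vertices of t_1 (in any order), then the vertices of t_2 not already listed, and so on. Then for every index i and every edge (a,b) with a among the first i listed vertices and b not among them, at least one endpoint of (a,b) lies in the bag t_{j_i}, where j_i is the least index j such that the i-th listed vertex belongs to t_j. -/
import Mathlib


/-- A path decomposition of `G`. -/
structure PathDecomp {V : Type*} (G : SimpleGraph V) where
  m : ℕ
  bag : Fin m → Set V
  cover : ∀ ⦃u v⦄, G.Adj u v → ∃ i, u ∈ bag i ∧ v ∈ bag i
  interval : ∀ v (i j k : Fin m), i ≤ j → j ≤ k → v ∈ bag i → v ∈ bag k → v ∈ bag j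

/-- The width of a path decomposition: the maximal bag size. -/
noncomputable def PathDecomp.width {V : Type*} {G : SimpleGraph V} (D : PathDecomp G) : ℕ :=
  Finset.univ.sup fun i => (D.bag i).ncard

/-- The path width of a finite graph. -/
noncomputable def pathWidth {V : Type*} (G : SimpleGraph V) : ℕ :=
  sInf (Set.range (PathDecomp.width (G := G)))


/-- Let `t_1, …, t_m` be a path decomposition of `G`, and list the vertices
bag by bag (first the vertices of `t_1`, then the new vertices of `t_2`, etc.).  Such an
ordering `b` is exactly one that is monotone with respect to the index `f v` of the first
bag containing `v`.  Then for every index `i` and every edge `(a, c)` with `a` among the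
first `i` listed vertices and `c` not among them, at least one endpoint of the edge lies
in the bag `t_{f (b i)}`. -/
theorem edge_endpoint_in_first_bag {V : Type*} [Fintype V] [DecidableEq V]
    (G : SimpleGraph V) (D : PathDecomp G)
    (f : V → Fin D.m)
    (hf : ∀ v : V, v ∈ D.bag (f v) ∧ ∀ j : Fin D.m, v ∈ D.bag j → f v ≤ j)
    (b : Fin (Fintype.card V) ≃ V)
    (hb : ∀ p q : Fin (Fintype.card V), p ≤ q → f (b p) ≤ f (b q)) :
    ∀ (i p q : Fin (Fintype.card V)), p ≤ i → i < q → G.Adj (b p) (b q) →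
      b p ∈ D.bag (f (b i)) ∨ b q ∈ D.bag (f (b i)) := by
  intro i p q hpi hiq hadj
  obtain ⟨j, hpj, hqj⟩ := D.cover hadj
  left
  exact D.interval _ _ _ _ (hb p i hpi)
    (le_trans (hb i q hiq.le) ((hf (b q)).2 j hqj)) (hf (b p)).1 hpj
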